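/- arXiv:1309.5751 — 2 statements merged into one kernel-verified Lean document; each statement's English description precedes it below -/
import Mathlib

section
/- Let K be a valued difference field of residue characteristic 0 satisfying Axiom 2, and suppose (G, a) is in σ-hensel configuration. Then there is b ∈ K with v(b − a) ≥ γ(G,a) and v(G(b)) > v(G(a)), and either G(b) = 0 or (G, b) is in σ-hensel configuration; moreover for any such b one has v(b − a) = γ(G,a) and γ(G,b) > γ(G,a). -/
noncomputable section
open scoped Classical

/-- A valued difference field: a valued field `(K, v)` with value group `Γ`
(additive, `v : K → WithTop Γ`, `v 0 = ⊤`), together with a distinguished field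
automorphism `σ` fixing the valuation ring setwise; `σΓ` is the induced
order-preserving automorphism of the value group. -/
structure VDF (K : Type*) [Field K] (Γ : Type*) [AddCommGroup Γ] [LinearOrder Γ] [IsOrderedAddMonoid Γ] where
  v : K → WithTop Γ
  σ : K ≃+* K
  σΓ : Γ ≃o Γ
  v_eq_top_iff : ∀ x : K, v x = ⊤ ↔ x = 0
  v_one : v 1 = 0
  v_mul : ∀ x y : K, v (x * y) = v x + v y
  v_neg : ∀ x : K, v (-x) = v x
  v_add : ∀ x y : K, min (v x) (v y) ≤ v (x + y)
  v_sigma : ∀ x : K, v (σ x) = WithTop.map σΓ (v x)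

namespace VDF

variable {K : Type*} [Field K] {Γ : Type*} [AddCommGroup Γ] [LinearOrder Γ] [IsOrderedAddMonoid Γ]

/-- A σ-polynomial of order `≤ n - 1` over `K` is encoded as an ordinary polynomial
`P` in the variables `X 0, …, X (n-1)`; its value at `a` is obtained by substituting
`σ^k(a)` for `X k`. -/
def sEval (V : VDF K Γ) {n : ℕ} (P : MvPolynomial (Fin n) K) (a : K) : K :=
  MvPolynomial.eval (fun k : Fin n => (⇑V.σ)^[(k : ℕ)] a) P

/-- `σ^i(γ) = Σ_k i_k σ^k(γ)` for a multi-index `i`. -/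
def sigmaIdx (V : VDF K Γ) {n : ℕ} (i : Fin n →₀ ℕ) (γ : Γ) : Γ :=
  ∑ k : Fin n, (i k) • (⇑V.σΓ)^[(k : ℕ)] γ

/-- `F_v(γ) = min_i (v(a_i) + σ^i(γ))`, the minimum over the monomials
(support) of the σ-polynomial `P` with coefficients `a_i`. -/
def Fv (V : VDF K Γ) {n : ℕ} (P : MvPolynomial (Fin n) K) (γ : Γ) : WithTop Γ :=
  P.support.inf fun i => V.v (MvPolynomial.coeff i P) + (V.sigmaIdx i γ : WithTop Γ)

/-- The norm `|j| = Σ_k j_k` of a multi-index. -/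
def degSum {n : ℕ} (j : Fin n →₀ ℕ) : ℕ := j.sum fun _ m => m

/-- The formal Taylor coefficient (Hasse derivative) `P_(j)` of a σ-polynomial `P`,
so that `P(y + x) = Σ_j P_(j)(y) σ(x)^j`. -/
def hasse {n : ℕ} (P : MvPolynomial (Fin n) K) (j : Fin n →₀ ℕ) :
    MvPolynomial (Fin n) K :=
  MvPolynomial.coeff j
    (MvPolynomial.bind₁
      (fun k => (MvPolynomial.C (MvPolynomial.X k) + MvPolynomial.X k :
        MvPolynomial (Fin n) (MvPolynomial (Fin n) K)))
      (MvPolynomial.map MvPolynomial.C P))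

/-- `(G, a)` is in σ-hensel configuration with associated `γ`. -/
def InSHC (V : VDF K Γ) {n : ℕ} (P : MvPolynomial (Fin (n + 1)) K) (a : K) (γ : Γ) :
    Prop :=
  (∃ i ∈ P.support, i ≠ 0) ∧
  (∃ i : Fin (n + 1) →₀ ℕ, degSum i = 1 ∧
      V.v (V.sEval P a) =
        V.v (V.sEval (hasse P i) a) + (V.sigmaIdx i γ : WithTop Γ)) ∧
  (∀ j : Fin (n + 1) →₀ ℕ, degSum j = 1 →
      V.v (V.sEval P a) ≤ V.v (V.sEval (hasse P j) a) + (V.sigmaIdx j γ : WithTop Γ)) ∧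
  (∀ j l : Fin (n + 1) →₀ ℕ, j ≠ 0 → l ≠ 0 → hasse P j ≠ 0 →
      V.v (V.sEval (hasse P j) a) + (V.sigmaIdx j γ : WithTop Γ) <
        V.v (V.sEval (hasse P (j + l)) a) + (V.sigmaIdx (j + l) γ : WithTop Γ))

/-- The residue field has characteristic zero. -/
def resChar0 (V : VDF K Γ) : Prop := ∀ m : ℕ, 0 < m → V.v (m : K) = 0

/-- Axiom 2: the residue difference field is linear difference closed, phrased at the
level of `K`: for `a_0, …, a_m` in the valuation ring, with some `a_i` a unit, the
equation `1 + Σ_i ā_i σ̄^i(x) = 0` has a solution in the residue field. -/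
def axiom2 (V : VDF K Γ) : Prop :=
  ∀ (m : ℕ) (a : Fin (m + 1) → K), (∀ i, 0 ≤ V.v (a i)) → (∃ i, V.v (a i) = 0) →
    ∃ u : K, 0 ≤ V.v u ∧ 0 < V.v (1 + ∑ i : Fin (m + 1), a i * (⇑V.σ)^[(i : ℕ)] u)

/-- σ-henselianity. -/
def sigmaHenselian (V : VDF K Γ) : Prop :=
  ∀ (n : ℕ) (P : MvPolynomial (Fin (n + 1)) K) (a : K) (γ : Γ),
    V.InSHC P a γ → ∃ b : K, V.v (b - a) = (γ : WithTop Γ) ∧ V.sEval P b = 0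

/-- `s` is a pseudo-Cauchy sequence. -/
def IsPC (V : VDF K Γ) {I : Type*} [LinearOrder I] (s : I → K) : Prop :=
  ∃ i0 : I, ∀ i j k : I, i0 ≤ i → i < j → j < k → V.v (s j - s i) < V.v (s k - s j)

/-- `x` is a pseudolimit of `s`, i.e. `v (x - s ρ)` is eventually strictly increasing. -/
def Plim (V : VDF K Γ) {I : Type*} [LinearOrder I] (s : I → K) (x : K) : Prop :=
  ∃ i0 : I, ∀ i j : I, i0 ≤ i → i < j → V.v (x - s i) < V.v (x - s j)

/-- Equivalence of pc-sequences: they have the same pseudolimits. -/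
def EquivPC (V : VDF K Γ) {I : Type*} [LinearOrder I] (s t : I → K) : Prop :=
  ∀ x : K, V.Plim s x ↔ V.Plim t x

/-- Axiom 1 for a difference subfield `E` of `K`: the induced automorphism of the
residue field of `E` is of infinite order, phrased at the level of `E`:
for each `d > 0` there is `y` in the valuation ring of `E` with
`σ̄^d(ȳ) ≠ ȳ`, i.e. `v (σ^d y - y) = 0`. -/
def axiom1On (V : VDF K Γ) (E : Subfield K) : Prop :=
  ∀ d : ℕ, 0 < d → ∃ y ∈ E, 0 ≤ V.v y ∧ V.v ((⇑V.σ)^[d] y - y) = 0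

end VDF
namespace VDF

open MvPolynomial

variable {K : Type*} [Field K] {Γ : Type*} [AddCommGroup Γ] [LinearOrder Γ] [IsOrderedAddMonoid Γ] (V : VDF K Γ)

lemma v_zero : V.v 0 = ⊤ := (V.v_eq_top_iff 0).mpr rfl

lemma v_ne_top_iff {x : K} : V.v x ≠ ⊤ ↔ x ≠ 0 := (V.v_eq_top_iff x).not

lemma v_add_eq_of_lt {x y : K} (h : V.v x < V.v y) : V.v (x + y) = V.v x := by
  refine le_antisymm ?_ (le_trans (le_min le_rfl h.le) (V.v_add x y))
  by_contra hlt
  push_neg at hlt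
  have h2 := V.v_add (x + y) (-y)
  rw [add_neg_cancel_right, V.v_neg] at h2
  exact absurd h2 (not_le.mpr (lt_min hlt h))

lemma v_sub_le {x y : K} : min (V.v x) (V.v y) ≤ V.v (x - y) := by
  have := V.v_add x (-y)
  rwa [V.v_neg, ← sub_eq_add_neg] at this

lemma v_sum_lt {ι : Type*} (s : Finset ι) (f : ι → K) {c : WithTop Γ} (hc : c < ⊤)
    (h : ∀ j ∈ s, c < V.v (f j)) : c < V.v (∑ j ∈ s, f j) := by
  classical
  induction s using Finset.induction with
  | empty => simpa [V.v_zero] using hc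
  | @insert a s ha ih =>
    rw [Finset.sum_insert ha]
    refine lt_of_lt_of_le (lt_min (h a (Finset.mem_insert_self a s)) ?_) (V.v_add _ _)
    exact ih fun j hj => h j (Finset.mem_insert_of_mem hj)

lemma v_prod {ι : Type*} (s : Finset ι) (f : ι → K) :
    V.v (∏ j ∈ s, f j) = ∑ j ∈ s, V.v (f j) := by
  classical
  induction s using Finset.induction with
  | empty => simpa using V.v_one
  | @insert a s ha ih =>
    rw [Finset.prod_insert ha, Finset.sum_insert ha, V.v_mul, ih]

lemma v_pow (x : K) (m : ℕ) : V.v (x ^ m) = m • V.v x := by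
  induction m with
  | zero => simpa using V.v_one
  | succ m ih => rw [pow_succ, V.v_mul, ih, succ_nsmul]

lemma v_iter (k : ℕ) (x : K) :
    V.v ((⇑V.σ)^[k] x) = WithTop.map ((⇑V.σΓ)^[k]) (V.v x) := by
  induction k with
  | zero => cases h : V.v x <;> simp [h]
  | succ k ih =>
    rw [Function.iterate_succ_apply', V.v_sigma, ih, Function.iterate_succ']
    cases h : V.v x <;> simp [WithTop.map] <;> exact Option.map_map _ _ _

lemma v_sigma_symm (x : K) : V.v (V.σ.symm x) = WithTop.map (⇑V.σΓ.symm) (V.v x) := by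
  have := V.v_sigma (V.σ.symm x)
  rw [RingEquiv.apply_symm_apply] at this
  rw [this]
  cases h : V.v (V.σ.symm x) <;> simp

lemma v_symm_iter (k : ℕ) (x : K) :
    V.v ((⇑V.σ.symm)^[k] x) = WithTop.map ((⇑V.σΓ.symm)^[k]) (V.v x) := by
  induction k with
  | zero => cases h : V.v x <;> simp [h]
  | succ k ih =>
    rw [Function.iterate_succ_apply', V.v_sigma_symm, ih, Function.iterate_succ']
    cases h : V.v x <;> simp [WithTop.map] <;> exact Option.map_map _ _ _

lemma iter_add (k : ℕ) (x y : K) :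
    (⇑V.σ)^[k] (x + y) = (⇑V.σ)^[k] x + (⇑V.σ)^[k] y := by
  induction k with
  | zero => rfl
  | succ k ih => rw [Function.iterate_succ_apply', ih, map_add, Function.iterate_succ_apply',
      Function.iterate_succ_apply']

lemma iter_mul (k : ℕ) (x y : K) :
    (⇑V.σ)^[k] (x * y) = (⇑V.σ)^[k] x * (⇑V.σ)^[k] y := by
  induction k with
  | zero => rfl
  | succ k ih => rw [Function.iterate_succ_apply', ih, map_mul, Function.iterate_succ_apply',
      Function.iterate_succ_apply']

lemma sigmaG_zero : V.σΓ 0 = 0 := by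
  have h1 : WithTop.map ⇑V.σΓ ((0 : Γ) : WithTop Γ) = ((0 : Γ) : WithTop Γ) := by
    rw [show (((0 : Γ) : WithTop Γ)) = V.v 1 from V.v_one.symm, ← V.v_sigma, map_one, V.v_one]
  rw [WithTop.map_coe] at h1
  exact_mod_cast h1

lemma sigmaG_iter_zero (k : ℕ) : (⇑V.σΓ)^[k] (0 : Γ) = 0 := by
  induction k with
  | zero => rfl
  | succ k ih => rw [Function.iterate_succ_apply', ih, V.sigmaG_zero]

lemma sigmaG_iter_strictMono (k : ℕ) : StrictMono ((⇑V.σΓ)^[k]) :=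
  (V.σΓ.strictMono).iterate k

lemma sigmaIdx_add {n : ℕ} (i l : Fin n →₀ ℕ) (γ : Γ) :
    V.sigmaIdx (i + l) γ = V.sigmaIdx i γ + V.sigmaIdx l γ := by
  unfold sigmaIdx
  rw [← Finset.sum_add_distrib]
  refine Finset.sum_congr rfl fun k _ => ?_
  rw [Finsupp.add_apply, add_smul]

lemma sigmaIdx_single {n : ℕ} (t : Fin n) (γ : Γ) :
    V.sigmaIdx (Finsupp.single t 1) γ = (⇑V.σΓ)^[(t : ℕ)] γ := by
  unfold sigmaIdx
  rw [Finset.sum_eq_single t]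
  · simp
  · intro k _ hk
    simp [Finsupp.single_apply, (Ne.symm hk)]
  · simp

lemma sigmaIdx_mono {n : ℕ} (i : Fin n →₀ ℕ) : Monotone (V.sigmaIdx i) := by
  intro x y hxy
  exact Finset.sum_le_sum fun k _ => nsmul_le_nsmul_right ((V.sigmaG_iter_strictMono k).monotone hxy) _

lemma sigmaIdx_strictMono {n : ℕ} {i : Fin n →₀ ℕ} (hi : i ≠ 0) :
    StrictMono (V.sigmaIdx i) := by
  intro x y hxy
  obtain ⟨k, hk⟩ : ∃ k, i k ≠ 0 := by
    by_contra hc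
    push_neg at hc
    exact hi (Finsupp.ext fun k => hc k)
  refine Finset.sum_lt_sum (fun t _ => nsmul_le_nsmul_right ((V.sigmaG_iter_strictMono t).monotone hxy.le) _) ⟨k, Finset.mem_univ k, ?_⟩
  exact nsmul_lt_nsmul_right hk (V.sigmaG_iter_strictMono k hxy)

end VDF
namespace VDF

open MvPolynomial

variable {K : Type*} [Field K] {N : ℕ}

/-- The generic-translation polynomial whose coefficients are the Hasse derivatives. -/
def DD (P : MvPolynomial (Fin N) K) : MvPolynomial (Fin N) (MvPolynomial (Fin N) K) :=
  bind₁ (fun k => (C (X k) + X k)) (map C P)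

lemma hasse_eq_coeff_DD (P : MvPolynomial (Fin N) K) (j : Fin N →₀ ℕ) :
    hasse P j = MvPolynomial.coeff j (DD P) := rfl

lemma binom_pow (a : Fin N) (r : MvPolynomial (Fin N) K) (n : ℕ) :
    ((C r + X a : MvPolynomial (Fin N) (MvPolynomial (Fin N) K)) ^ n)
      = ∑ t ∈ Finset.range (n + 1),
          monomial (Finsupp.single a t)
            ((n.choose t : MvPolynomial (Fin N) K) * r ^ (n - t)) := by
  rw [add_comm (C r) (X a), add_pow]
  refine Finset.sum_congr rfl fun t _ => ?_
  rw [← C_mul_X_pow_eq_monomial, map_mul,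
    map_natCast (C : MvPolynomial (Fin N) K →+* MvPolynomial (Fin N) (MvPolynomial (Fin N) K)),
    map_pow]
  ring

lemma coeff_prod_CXX (s : Finset (Fin N)) (e : Fin N → ℕ) (j : Fin N →₀ ℕ) :
    MvPolynomial.coeff j
        (∏ k ∈ s, (C (X k) + X k : MvPolynomial (Fin N) (MvPolynomial (Fin N) K)) ^ e k)
      = if ∀ k, k ∉ s → j k = 0 then
          ((∏ k ∈ s, (e k).choose (j k) : ℕ) : MvPolynomial (Fin N) K)
            * ∏ k ∈ s, (X k : MvPolynomial (Fin N) K) ^ (e k - j k)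
        else 0 := by
  classical
  induction s using Finset.induction generalizing j with
  | empty =>
    simp only [Finset.prod_empty, Finset.notMem_empty, not_false_iff, true_implies,
      Nat.cast_one, mul_one]
    by_cases hj : j = 0
    · subst hj; simp [coeff_one]
    · rw [coeff_one, if_neg fun h => hj h.symm, if_neg]
      intro h
      exact hj (by ext k; exact h k)
  | @insert a s ha ih =>
    rw [Finset.prod_insert ha, binom_pow, Finset.sum_mul, coeff_sum]
    have key : ∀ t ∈ Finset.range (e a + 1), t ≠ j a →
        MvPolynomial.coeff j
          (monomial (Finsupp.single a t)
              (((e a).choose t : MvPolynomial (Fin N) K) * X a ^ (e a - t))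
            * ∏ k ∈ s, (C (X k) + X k : MvPolynomial (Fin N) (MvPolynomial (Fin N) K)) ^ e k)
          = 0 := by
      intro t _ hne
      rw [coeff_monomial_mul']
      split_ifs with hle
      · have htj : t ≤ j a := Finsupp.single_le_iff.mp hle
        rw [ih, if_neg, mul_zero]
        push_neg
        refine ⟨a, ha, ?_⟩
        simp only [Finsupp.tsub_apply, Finsupp.single_eq_same]
        omega
      · rfl
    by_cases hja : j a ≤ e a
    · rw [Finset.sum_eq_single_of_mem (j a) (Finset.mem_range.mpr (Nat.lt_succ_of_le hja))
        (fun t ht hne => key t ht hne)]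
      rw [coeff_monomial_mul', if_pos (Finsupp.single_le_iff.mpr le_rfl), ih]
      have happ : ∀ k, k ≠ a → (j - Finsupp.single a (j a)) k = j k := by
        intro k hk
        simp [Finsupp.tsub_apply, Finsupp.single_apply, (Ne.symm hk)]
      have happs : ∀ k ∈ s, (j - Finsupp.single a (j a)) k = j k :=
        fun k hk => happ k (fun hh => ha (hh ▸ hk))
      by_cases hcond : ∀ k, k ∉ insert a s → j k = 0
      · rw [if_pos, if_pos hcond]
        · rw [Finset.prod_insert ha, Finset.prod_insert ha,
            Finset.prod_congr rfl (fun k hk => by rw [happs k hk]),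
            (Finset.prod_congr rfl (fun k hk => by rw [happs k hk]) :
              (∏ k ∈ s, (X k : MvPolynomial (Fin N) K) ^ (e k - (j - Finsupp.single a (j a)) k))
                = ∏ k ∈ s, (X k : MvPolynomial (Fin N) K) ^ (e k - j k)),
            Nat.cast_mul]
          ring
        · intro k hk
          by_cases hka : k = a
          · subst hka; simp [Finsupp.tsub_apply]
          · rw [happ k hka]
            exact hcond k (by simp [Finset.mem_insert, hka, hk])
      · rw [if_neg, if_neg hcond, mul_zero]
        intro hcc
        apply hcond
        intro k hk
        simp only [Finset.mem_insert, not_or] at hk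
        rw [← happ k hk.1]
        exact hcc k hk.2
    · rw [Finset.sum_eq_zero (fun t ht => key t ht (by rw [Finset.mem_range] at ht; omega))]
      rw [eq_comm]
      split_ifs with hcond
      · rw [Finset.prod_insert ha, Nat.choose_eq_zero_of_lt (by omega), zero_mul,
          Nat.cast_zero, zero_mul]
      · rfl

end VDF
namespace VDF

open MvPolynomial

variable {K : Type*} [Field K] {N : ℕ}

lemma hasse_monomial (d : Fin N →₀ ℕ) (c : K) (j : Fin N →₀ ℕ) :
    hasse (monomial d c) j
      = monomial (d - j) (((∏ k : Fin N, (d k).choose (j k) : ℕ) : K) * c) := by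
  classical
  rw [hasse_eq_coeff_DD]
  unfold DD
  rw [map_monomial, bind₁_monomial]
  rw [Finset.prod_subset (Finset.subset_univ d.support)
    (fun k _ hk => by rw [Finsupp.notMem_support_iff.mp hk, pow_zero])]
  rw [coeff_C_mul, coeff_prod_CXX, if_pos (fun k hk => absurd (Finset.mem_univ k) hk)]
  rw [monomial_eq, Finsupp.prod]
  rw [Finset.prod_subset (Finset.subset_univ (d - j).support)
    (fun k _ hk => by rw [Finsupp.notMem_support_iff.mp hk, pow_zero])]
  have : ∀ k : Fin N, (d - j) k = d k - j k := fun k => Finsupp.tsub_apply d j k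
  rw [(Finset.prod_congr rfl (fun k _ => by rw [this k]) :
    (∏ x : Fin N, (X x : MvPolynomial (Fin N) K) ^ (d - j) x)
      = ∏ x : Fin N, X x ^ (d x - j x))]
  rw [map_mul, map_natCast (C : K →+* MvPolynomial (Fin N) K)]
  ring

lemma hasse_add (p q : MvPolynomial (Fin N) K) (j : Fin N →₀ ℕ) :
    hasse (p + q) j = hasse p j + hasse q j := by
  rw [hasse_eq_coeff_DD, hasse_eq_coeff_DD, hasse_eq_coeff_DD]
  unfold DD
  rw [map_add, map_add, coeff_add]

/-- The fundamental coefficient formula for Hasse derivatives. -/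
lemma coeff_hasse (P : MvPolynomial (Fin N) K) (j m : Fin N →₀ ℕ) :
    MvPolynomial.coeff m (hasse P j)
      = ((∏ k : Fin N, (m k + j k).choose (j k) : ℕ) : K) * MvPolynomial.coeff (m + j) P := by
  classical
  induction P using MvPolynomial.induction_on' with
  | add p q ihp ihq => rw [hasse_add, coeff_add, ihp, ihq, coeff_add]; ring
  | monomial d c =>
    rw [hasse_monomial, coeff_monomial, coeff_monomial]
    by_cases h : d = m + j
    · subst h
      rw [if_pos (add_tsub_cancel_right m j), if_pos rfl]
      have : ∀ k : Fin N, (m + j) k = m k + j k := fun k => Finsupp.add_apply m j k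
      rw [Finset.prod_congr rfl fun k _ => by rw [this k]]
    · rw [if_neg h, mul_zero]
      by_cases h2 : d - j = m
      · rw [if_pos h2]
        have hnle : ¬ j ≤ d := fun hle => h (by rw [← h2, tsub_add_cancel_of_le hle])
        obtain ⟨k, hk⟩ : ∃ k, d k < j k := by
          by_contra hc
          push_neg at hc
          exact hnle fun k => hc k
        rw [Finset.prod_eq_zero (Finset.mem_univ k) (Nat.choose_eq_zero_of_lt hk),
          Nat.cast_zero, zero_mul]
      · rw [if_neg h2]

lemma hasse_zero_idx (P : MvPolynomial (Fin N) K) : hasse P 0 = P := by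
  ext m
  rw [coeff_hasse]
  simp

lemma hasse_zero (j : Fin N →₀ ℕ) : hasse (0 : MvPolynomial (Fin N) K) j = 0 := by
  ext m
  rw [coeff_hasse]
  simp

lemma nat_choose_id (a b c : ℕ) :
    (a + c).choose c * (a + b + c).choose b = (b + c).choose c * (a + b + c).choose (b + c) := by
  have key : ∀ x y z : ℕ,
      (x + z).choose z * (x + y + z).choose y * (x.factorial * y.factorial * z.factorial)
        = (x + y + z).factorial := by
    intro x y z
    have h1 : (x + z).choose z * z.factorial * x.factorial = (x + z).factorial := by
      have := Nat.choose_mul_factorial_mul_factorial (Nat.le_add_left z x)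
      simpa [show x + z - z = x from by omega] using this
    have h2 : (x + y + z).choose y * y.factorial * (x + z).factorial
        = (x + y + z).factorial := by
      have := Nat.choose_mul_factorial_mul_factorial
        (show y ≤ x + y + z from by omega)
      simpa [show x + y + z - y = x + z from by omega] using this
    calc (x + z).choose z * (x + y + z).choose y * (x.factorial * y.factorial * z.factorial)
        = ((x + y + z).choose y * y.factorial) * ((x + z).choose z * z.factorial * x.factorial) := by ring
      _ = ((x + y + z).choose y * y.factorial) * (x + z).factorial := by rw [h1]
      _ = (x + y + z).factorial := h2
  have key2 :
      (b + c).choose c * (a + b + c).choose (b + c) * (a.factorial * b.factorial * c.factorial)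
        = (a + b + c).factorial := by
    have h1 : (b + c).choose c * c.factorial * b.factorial = (b + c).factorial := by
      have := Nat.choose_mul_factorial_mul_factorial (Nat.le_add_left c b)
      simpa [show b + c - c = b from by omega] using this
    have h2 : (a + b + c).choose (b + c) * (b + c).factorial * a.factorial
        = (a + b + c).factorial := by
      have := Nat.choose_mul_factorial_mul_factorial
        (show b + c ≤ a + b + c from by omega)
      simpa [show a + b + c - (b + c) = a from by omega] using this
    calc (b + c).choose c * (a + b + c).choose (b + c) * (a.factorial * b.factorial * c.factorial)
        = ((a + b + c).choose (b + c) * ((b + c).choose c * c.factorial * b.factorial)) * a.factorial := by ring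
      _ = ((a + b + c).choose (b + c) * (b + c).factorial) * a.factorial := by rw [h1]
      _ = (a + b + c).factorial := by rw [← h2]
  have hpos : 0 < a.factorial * b.factorial * c.factorial :=
    Nat.mul_pos (Nat.mul_pos a.factorial_pos b.factorial_pos) c.factorial_pos
  have := (key a b c).trans key2.symm
  exact Nat.eq_of_mul_eq_mul_right hpos this

/-- Composition rule for Hasse derivatives. -/
lemma hasse_hasse (P : MvPolynomial (Fin N) K) (j l : Fin N →₀ ℕ) :
    hasse (hasse P j) l
      = ((∏ k : Fin N, (j k + l k).choose (l k) : ℕ) : K) • hasse P (j + l) := by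
  ext m
  rw [coeff_hasse, coeff_hasse, coeff_smul, coeff_hasse, smul_eq_mul]
  have habel : m + l + j = m + (j + l) := by
    rw [add_assoc, add_comm l j]
  rw [habel, ← mul_assoc, ← mul_assoc, ← Nat.cast_mul, ← Nat.cast_mul, ← Finset.prod_mul_distrib,
    ← Finset.prod_mul_distrib]
  congr 1
  congr 1
  refine Finset.prod_congr rfl fun k _ => ?_
  simp only [Finsupp.add_apply]
  have e1 : m k + l k + j k = m k + j k + l k := by omega
  have e2 : m k + (j k + l k) = m k + j k + l k := by omega
  rw [e1, e2]
  exact nat_choose_id (m k) (j k) (l k)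

end VDF
namespace VDF

open MvPolynomial

variable {K : Type*} [Field K] {Γ : Type*} [AddCommGroup Γ] [LinearOrder Γ] [IsOrderedAddMonoid Γ] {N : ℕ}

lemma coeff_eq_zero_of_hasse_single (hc : ∀ m : ℕ, 0 < m → (m : K) ≠ 0)
    {P : MvPolynomial (Fin N) K} {k : Fin N} (h : hasse P (Finsupp.single k 1) = 0) :
    ∀ m : Fin N →₀ ℕ, m k ≠ 0 → MvPolynomial.coeff m P = 0 := by
  intro m hm
  have hle : Finsupp.single k 1 ≤ m :=
    Finsupp.single_le_iff.mpr (Nat.one_le_iff_ne_zero.mpr hm)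
  set m' : Fin N →₀ ℕ := m - Finsupp.single k 1 with hm'
  have h1 : m' + Finsupp.single k 1 = m := tsub_add_cancel_of_le hle
  have h2 := coeff_hasse P (Finsupp.single k 1) m'
  rw [h, coeff_zero, h1] at h2
  have hprod : (∏ t : Fin N,
      (m' t + Finsupp.single k 1 t).choose (Finsupp.single k 1 t)) = m k := by
    rw [Finset.prod_eq_single k]
    · simp only [hm', Finsupp.tsub_apply, Finsupp.single_eq_same, Nat.choose_one_right]
      have : 1 ≤ m k := Nat.one_le_iff_ne_zero.mpr hm
      omega
    · intro t _ ht
      rw [Finsupp.single_eq_of_ne ht, Nat.choose_zero_right]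
    · simp
  rw [hprod] at h2
  rcases mul_eq_zero.mp h2.symm with h3 | h3
  · exact absurd h3 (hc (m k) (Nat.pos_of_ne_zero hm))
  · exact h3

lemma hasse_eq_zero_of_single (hc : ∀ m : ℕ, 0 < m → (m : K) ≠ 0)
    {P : MvPolynomial (Fin N) K} {j : Fin N →₀ ℕ} {k : Fin N} (hk : j k ≠ 0)
    (h : hasse P (Finsupp.single k 1) = 0) : hasse P j = 0 := by
  ext m
  rw [coeff_hasse, coeff_zero]
  have : MvPolynomial.coeff (m + j) P = 0 := by
    refine coeff_eq_zero_of_hasse_single hc h (m + j) ?_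
    rw [Finsupp.add_apply]
    omega
  rw [this, mul_zero]

lemma exists_unit_hasse (hc : ∀ m : ℕ, 0 < m → (m : K) ≠ 0)
    {P : MvPolynomial (Fin N) K} (h1 : ∃ i ∈ P.support, i ≠ 0) :
    ∃ k, hasse P (Finsupp.single k 1) ≠ 0 := by
  by_contra hcon
  push_neg at hcon
  obtain ⟨i, hi, hine⟩ := h1
  obtain ⟨k, hk⟩ : ∃ k, i k ≠ 0 := by
    by_contra hc2
    push_neg at hc2
    exact hine (by ext t; exact hc2 t)
  exact (MvPolynomial.mem_support_iff.mp hi)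
    (coeff_eq_zero_of_hasse_single hc (hcon k) i hk)

lemma hasse_ne_zero_single_of_mem (hc : ∀ m : ℕ, 0 < m → (m : K) ≠ 0)
    {P : MvPolynomial (Fin N) K} {j : Fin N →₀ ℕ} {k : Fin N} (hk : j k ≠ 0)
    (h : hasse P j ≠ 0) : hasse P (Finsupp.single k 1) ≠ 0 :=
  fun hz => h (hasse_eq_zero_of_single hc hk hz)

lemma iter_zero (V : VDF K Γ) (k : ℕ) : (⇑V.σ)^[k] (0 : K) = 0 := by
  induction k with
  | zero => rfl
  | succ k ih => rw [Function.iterate_succ_apply', ih, map_zero]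

/-- Taylor expansion of a σ-polynomial. -/
lemma taylor_sEval (V : VDF K Γ) (P : MvPolynomial (Fin N) K) (a x : K) :
    V.sEval P (a + x)
      = ∑ j ∈ (DD P).support,
          V.sEval (hasse P j) a * ∏ k : Fin N, ((⇑V.σ)^[(k : ℕ)] x) ^ (j k) := by
  classical
  have hrhs : ∑ j ∈ (DD P).support,
        V.sEval (hasse P j) a * ∏ k : Fin N, ((⇑V.σ)^[(k : ℕ)] x) ^ (j k)
      = eval₂ (eval (fun k : Fin N => (⇑V.σ)^[(k : ℕ)] a))
          (fun k : Fin N => (⇑V.σ)^[(k : ℕ)] x) (DD P) := by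
    rw [eval₂_eq']
    exact Finset.sum_congr rfl fun d _ => rfl
  rw [hrhs]
  unfold DD
  rw [show eval₂ (eval fun k : Fin N => (⇑V.σ)^[(k : ℕ)] a)
        (fun k : Fin N => (⇑V.σ)^[(k : ℕ)] x)
        (bind₁ (fun k => (C (X k) + X k)) (map C P))
      = eval₂Hom (eval fun k : Fin N => (⇑V.σ)^[(k : ℕ)] a)
        (fun k : Fin N => (⇑V.σ)^[(k : ℕ)] x)
        (bind₁ (fun k => (C (X k) + X k)) (map C P)) from rfl]
  rw [eval₂Hom_bind₁]
  rw [show (eval₂Hom (eval fun k : Fin N => (⇑V.σ)^[(k : ℕ)] a)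
      (fun i => eval₂Hom (eval fun k : Fin N => (⇑V.σ)^[(k : ℕ)] a)
        (fun k : Fin N => (⇑V.σ)^[(k : ℕ)] x) ((fun k => (C (X k) + X k)) i))
      (map C P) : K)
    = eval₂ ((eval fun k : Fin N => (⇑V.σ)^[(k : ℕ)] a).comp (C : K →+* MvPolynomial (Fin N) K))
      (fun i => eval₂Hom (eval fun k : Fin N => (⇑V.σ)^[(k : ℕ)] a)
        (fun k : Fin N => (⇑V.σ)^[(k : ℕ)] x) ((fun k => (C (X k) + X k)) i)) P
    from eval₂_map _ _ _ _]
  have hcomp : (eval fun k : Fin N => (⇑V.σ)^[(k : ℕ)] a).comp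
      (C : K →+* MvPolynomial (Fin N) K) = RingHom.id K := by
    ext r
    simp
  rw [hcomp]
  have hvar : ∀ i : Fin N,
      eval₂Hom (eval fun k : Fin N => (⇑V.σ)^[(k : ℕ)] a)
        (fun k : Fin N => (⇑V.σ)^[(k : ℕ)] x) ((fun k => (C (X k) + X k)) i)
      = (⇑V.σ)^[(i : ℕ)] (a + x) := by
    intro i
    simp only [map_add, eval₂Hom_C, eval₂Hom_X']
    rw [eval_X, V.iter_add]
  rw [funext hvar]
  rfl

lemma hasse_eq_zero_of_not_mem {P : MvPolynomial (Fin N) K} {j : Fin N →₀ ℕ}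
    (h : j ∉ (DD P).support) : hasse P j = 0 := by
  rw [hasse_eq_coeff_DD]
  exact MvPolynomial.notMem_support_iff.mp h

lemma zero_mem_DD_support {P : MvPolynomial (Fin N) K} (h : P ≠ 0) :
    (0 : Fin N →₀ ℕ) ∈ (DD P).support := by
  rw [MvPolynomial.mem_support_iff, ← hasse_eq_coeff_DD, hasse_zero_idx]
  exact h

lemma coe_nsmul_withTop (c : ℕ) (g : Γ) : ((c • g : Γ) : WithTop Γ) = c • (g : WithTop Γ) := by
  induction c with
  | zero => simp
  | succ c ih => rw [succ_nsmul, succ_nsmul, WithTop.coe_add, ih]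

lemma v_monomial_eval (V : VDF K Γ) {x : K} {β : Γ} (hx : V.v x = (β : WithTop Γ))
    (j : Fin N →₀ ℕ) :
    V.v (∏ k : Fin N, ((⇑V.σ)^[(k : ℕ)] x) ^ (j k)) = ((V.sigmaIdx j β : Γ) : WithTop Γ) := by
  rw [v_prod]
  unfold sigmaIdx
  rw [WithTop.coe_sum]
  refine Finset.sum_congr rfl fun k _ => ?_
  rw [v_pow, v_iter, hx, WithTop.map_coe, coe_nsmul_withTop]

lemma monomial_eval_zero {x : K} (V : VDF K Γ) (hx : x = 0) {j : Fin N →₀ ℕ} (hj : j ≠ 0) :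
    (∏ k : Fin N, ((⇑V.σ)^[(k : ℕ)] x) ^ (j k)) = 0 := by
  obtain ⟨k, hk⟩ : ∃ k, j k ≠ 0 := by
    by_contra hc2
    push_neg at hc2
    exact hj (by ext t; exact hc2 t)
  refine Finset.prod_eq_zero (Finset.mem_univ k) ?_
  rw [hx, V.iter_zero, zero_pow hk]

lemma sEval_smul (V : VDF K Γ) (c : K) (p : MvPolynomial (Fin N) K) (a : K) :
    V.sEval (c • p) a = c * V.sEval p a := by
  unfold sEval
  rw [smul_eq_C_mul, map_mul, eval_C]

lemma sEval_zero (V : VDF K Γ) (a : K) : V.sEval (0 : MvPolynomial (Fin N) K) a = 0 := by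
  unfold sEval
  rw [map_zero]

end VDF
namespace VDF

open MvPolynomial

variable {K : Type*} [Field K] {Γ : Type*} [AddCommGroup Γ] [LinearOrder Γ] [IsOrderedAddMonoid Γ] {N : ℕ}

lemma degSum_single (k : Fin N) : degSum (Finsupp.single k 1) = 1 := by
  unfold degSum
  rw [Finsupp.sum_single_index]
  rfl

lemma degSum_eq_one_iff (j : Fin N →₀ ℕ) :
    degSum j = 1 ↔ ∃ k, j = Finsupp.single k 1 := by
  constructor
  · intro hd
    unfold degSum at hd
    rw [Finsupp.sum] at hd
    have hcard : j.support.card ≤ 1 := by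
      have h1 : ∀ k ∈ j.support, 1 ≤ j k := fun k hk =>
        Nat.one_le_iff_ne_zero.mpr (Finsupp.mem_support_iff.mp hk)
      calc j.support.card = ∑ _k ∈ j.support, 1 := by simp
        _ ≤ ∑ k ∈ j.support, j k := Finset.sum_le_sum h1
        _ = 1 := hd
    have hne : j.support.Nonempty := by
      rw [Finsupp.support_nonempty_iff]
      intro hz
      rw [hz] at hd
      simp at hd
    obtain ⟨k, hk⟩ := Finset.card_eq_one.mp (le_antisymm hcard hne.card_pos)
    have hjx := (Finsupp.support_eq_singleton.mp hk).2
    have hval : j k = 1 := by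
      rw [hk, Finset.sum_singleton] at hd
      exact hd
    exact ⟨k, by rw [hjx, hval]⟩
  · rintro ⟨k, rfl⟩
    exact degSum_single k

lemma finsupp_add_ne_zero {j l : Fin N →₀ ℕ} (hj : j ≠ 0) : j + l ≠ 0 := by
  intro hz
  apply hj
  ext t
  have h1 : j t + l t = 0 := by rw [← Finsupp.add_apply, hz]; rfl
  have h0 : (0 : Fin N →₀ ℕ) t = 0 := rfl
  rw [h0]
  omega

variable (V : VDF K Γ)

section derived

variable {n : ℕ} {P : MvPolynomial (Fin (n + 1)) K} {a : K} {γ : Γ}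

/-- From condition 4, nonzero Hasse derivatives have nonzero value at `a`. -/
lemma sEval_hasse_ne_zero (h : V.InSHC P a γ) {j : Fin (n + 1) →₀ ℕ} (hj : j ≠ 0)
    (hne : hasse P j ≠ 0) : V.sEval (hasse P j) a ≠ 0 := by
  intro hz
  have := h.2.2.2 j j hj hj hne
  rw [hz] at this
  have hv : V.v (0 : K) = ⊤ := V.v_zero
  rw [hv, top_add] at this
  exact not_top_lt this

lemma sEval_P_ne_zero (hc : ∀ m : ℕ, 0 < m → (m : K) ≠ 0) (h : V.InSHC P a γ) :
    V.sEval P a ≠ 0 := by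
  intro hz
  obtain ⟨k, hk⟩ := exists_unit_hasse hc h.1
  have h3 := h.2.2.1 (Finsupp.single k 1) (degSum_single k)
  rw [show V.v (V.sEval P a) = ⊤ from (V.v_eq_top_iff _).mpr hz] at h3
  have := top_le_iff.mp h3
  rcases WithTop.add_eq_top.mp this with hh | hh
  · exact sEval_hasse_ne_zero V h (fun hz => one_ne_zero (Finsupp.single_eq_zero.mp hz)) hk
      ((V.v_eq_top_iff _).mp hh)
  · exact WithTop.coe_ne_top hh

/-- Dominance of higher-order terms: condition for `|j| ≥ 2`. -/
lemma higher_term_gt (hc : ∀ m : ℕ, 0 < m → (m : K) ≠ 0) (h : V.InSHC P a γ)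
    {j : Fin (n + 1) →₀ ℕ} (hj : j ≠ 0) (hdeg : degSum j ≠ 1) (hne : hasse P j ≠ 0) :
    V.v (V.sEval P a) < V.v (V.sEval (hasse P j) a) + (V.sigmaIdx j γ : WithTop Γ) := by
  obtain ⟨k, hk⟩ : ∃ k, j k ≠ 0 := by
    by_contra hcon
    push_neg at hcon
    exact hj (by ext t; exact hcon t)
  have hek : hasse P (Finsupp.single k 1) ≠ 0 := hasse_ne_zero_single_of_mem hc hk hne
  set e : Fin (n + 1) →₀ ℕ := Finsupp.single k 1 with he
  have hle : e ≤ j := Finsupp.single_le_iff.mpr (Nat.one_le_iff_ne_zero.mpr hk)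
  have hsum : e + (j - e) = j := add_tsub_cancel_of_le hle
  have hlne : j - e ≠ 0 := by
    intro hz
    rw [hz, add_zero] at hsum
    exact hdeg (hsum ▸ degSum_single k)
  have h4 := h.2.2.2 e (j - e) (fun hz => one_ne_zero (Finsupp.single_eq_zero.mp hz)) hlne hek
  rw [hsum] at h4
  exact lt_of_le_of_lt (h.2.2.1 e (degSum_single k)) h4

end derived

end VDF
namespace VDF

open MvPolynomial

variable {K : Type*} [Field K] {Γ : Type*} [AddCommGroup Γ] [LinearOrder Γ] [IsOrderedAddMonoid Γ]
variable (V : VDF K Γ) {n : ℕ} {P : MvPolynomial (Fin (n + 1)) K} {a : K} {γ : Γ}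

lemma hc_of_resChar0 (hchar : V.resChar0) : ∀ m : ℕ, 0 < m → (m : K) ≠ 0 := by
  intro m hm hz
  have := hchar m hm
  rw [hz, V.v_zero] at this
  exact WithTop.coe_ne_top (α := Γ) (a := 0) this.symm

/-- Value of a nonzero Hasse derivative is preserved at points `b` with `v (b - a) = γ`. -/
lemma val_preserve (hchar : V.resChar0) (h : V.InSHC P a γ) {b : K}
    (hb : V.v (b - a) = (γ : WithTop Γ)) (j : Fin (n + 1) →₀ ℕ) (hj : j ≠ 0) :
    V.v (V.sEval (hasse P j) b) = V.v (V.sEval (hasse P j) a) := by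
  classical
  by_cases hZ : hasse P j = 0
  · rw [hZ, V.sEval_zero, V.sEval_zero]
  have hQa : V.sEval (hasse P j) a ≠ 0 := V.sEval_hasse_ne_zero h hj hZ
  have hQaTop : V.v (V.sEval (hasse P j) a) ≠ ⊤ := V.v_ne_top_iff.mpr hQa
  have hbb : b = a + (b - a) := by ring
  rw [hbb, taylor_sEval]
  have h0mem : (0 : Fin (n + 1) →₀ ℕ) ∈ (DD (hasse P j)).support := zero_mem_DD_support hZ
  rw [← Finset.add_sum_erase _ _ h0mem]
  have hzero_term :
      V.sEval (hasse (hasse P j) 0) a * ∏ k : Fin (n + 1), ((⇑V.σ)^[(k : ℕ)] (b - a)) ^ ((0 : Fin (n + 1) →₀ ℕ) k)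
        = V.sEval (hasse P j) a := by
    rw [hasse_zero_idx]
    simp
  rw [hzero_term]
  apply V.v_add_eq_of_lt
  refine V.v_sum_lt _ _ (lt_top_iff_ne_top.mpr hQaTop) ?_
  intro l hl
  have hlne : l ≠ 0 := Finset.ne_of_mem_erase hl
  rw [hasse_hasse, V.sEval_smul, V.v_mul, V.v_mul]
  have hmon := V.v_monomial_eval hb l
  rw [hmon]
  set c : ℕ := ∏ k : Fin (n + 1), (j k + l k).choose (l k) with hcdef
  by_cases hc0 : c = 0
  · rw [hc0]
    simp only [Nat.cast_zero]
    rw [(V.v_eq_top_iff (0 : K)).mpr rfl, top_add, top_add]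
    exact lt_top_iff_ne_top.mpr hQaTop
  · rw [hchar c (Nat.pos_of_ne_zero hc0), zero_add]
    have h4 := h.2.2.2 j l hj hlne hZ
    rw [V.sigmaIdx_add, WithTop.coe_add, ← add_assoc] at h4
    rw [add_right_comm] at h4
    exact (WithTop.add_lt_add_iff_right
      (WithTop.coe_ne_top (a := V.sigmaIdx j γ))).mp h4

/-- If `v (b - a) > γ` then the Taylor increment has value greater than `v (G(a))`. -/
lemma diff_val_gt (hchar : V.resChar0) (h : V.InSHC P a γ) {b : K}
    (hb : (γ : WithTop Γ) < V.v (b - a)) :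
    V.v (V.sEval P a) < V.v (V.sEval P b - V.sEval P a) := by
  classical
  have hc := V.hc_of_resChar0 hchar
  have hPa : V.sEval P a ≠ 0 := V.sEval_P_ne_zero hc h
  have hPaTop : V.v (V.sEval P a) ≠ ⊤ := V.v_ne_top_iff.mpr hPa
  have hPne : P ≠ 0 := by
    intro hz
    obtain ⟨i, hi, _⟩ := h.1
    rw [hz] at hi
    simp at hi
  have h0mem : (0 : Fin (n + 1) →₀ ℕ) ∈ (DD P).support := zero_mem_DD_support hPne
  have hbb : b = a + (b - a) := by ring
  have hdiff : V.sEval P b - V.sEval P a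
      = ∑ l ∈ (DD P).support.erase 0,
          V.sEval (hasse P l) a * ∏ k : Fin (n + 1), ((⇑V.σ)^[(k : ℕ)] (b - a)) ^ (l k) := by
    conv_lhs => rw [hbb, taylor_sEval]
    rw [← Finset.add_sum_erase _ _ h0mem]
    have hzero_term :
        V.sEval (hasse P 0) a * ∏ k : Fin (n + 1), ((⇑V.σ)^[(k : ℕ)] (b - a)) ^ ((0 : Fin (n + 1) →₀ ℕ) k)
          = V.sEval P a := by
      rw [hasse_zero_idx]
      simp
    rw [hzero_term, add_sub_cancel_left]
  rw [hdiff]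
  refine V.v_sum_lt _ _ (lt_top_iff_ne_top.mpr hPaTop) ?_
  intro l hl
  have hlne : l ≠ 0 := Finset.ne_of_mem_erase hl
  have hlmem : hasse P l ≠ 0 := by
    rw [hasse_eq_coeff_DD]
    exact MvPolynomial.mem_support_iff.mp (Finset.mem_of_mem_erase hl)
  rw [V.v_mul]
  by_cases hx0 : b - a = 0
  · rw [monomial_eval_zero V hx0 hlne, (V.v_eq_top_iff (0 : K)).mpr rfl, add_top]
    exact lt_top_iff_ne_top.mpr hPaTop
  · obtain ⟨β, hβ⟩ := WithTop.ne_top_iff_exists.mp (V.v_ne_top_iff.mpr hx0)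
    have hγβ : γ < β := by
      rw [← hβ] at hb
      exact_mod_cast hb
    rw [V.v_monomial_eval hβ.symm l]
    by_cases hdeg : degSum l = 1
    · have h3 := h.2.2.1 l hdeg
      have hQa : V.sEval (hasse P l) a ≠ 0 := V.sEval_hasse_ne_zero h hlne hlmem
      have hQaTop : V.v (V.sEval (hasse P l) a) ≠ ⊤ := V.v_ne_top_iff.mpr hQa
      refine lt_of_le_of_lt h3 ?_
      rw [WithTop.add_lt_add_iff_left hQaTop]
      exact_mod_cast V.sigmaIdx_strictMono hlne hγβ
    · refine lt_of_lt_of_le (V.higher_term_gt hc h hlne hdeg hlmem) ?_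
      exact add_le_add_right (WithTop.coe_le_coe.mpr (V.sigmaIdx_mono l hγβ.le)) _

/-- Any admissible `b` satisfies `v (b - a) = γ` exactly. -/
lemma vba_eq (hchar : V.resChar0) (h : V.InSHC P a γ) {b : K}
    (hb1 : (γ : WithTop Γ) ≤ V.v (b - a)) (hb2 : V.v (V.sEval P a) < V.v (V.sEval P b)) :
    V.v (b - a) = (γ : WithTop Γ) := by
  rcases eq_or_lt_of_le hb1 with heq | hlt
  · exact heq.symm
  · exfalso
    have hd := V.diff_val_gt hchar h hlt
    have : V.sEval P a = V.sEval P b - (V.sEval P b - V.sEval P a) := by ring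
    have hge := V.v_sub_le (x := V.sEval P b) (y := V.sEval P b - V.sEval P a)
    rw [← this] at hge
    exact lt_irrefl _ (lt_of_lt_of_le (lt_min hb2 hd) hge)
end VDF
namespace VDF

open MvPolynomial

variable {K : Type*} [Field K] {Γ : Type*} [AddCommGroup Γ] [LinearOrder Γ] [IsOrderedAddMonoid Γ] {N : ℕ}
variable (V : VDF K Γ)

lemma sigmaG_iter_symm_cancel (k : ℕ) (g : Γ) :
    (⇑V.σΓ.symm)^[k] ((⇑V.σΓ)^[k] g) = g :=
  (Function.LeftInverse.iterate (fun x => V.σΓ.symm_apply_apply x) k) g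

lemma sigmaG_symm_iter_cancel (k : ℕ) (g : Γ) :
    (⇑V.σΓ)^[k] ((⇑V.σΓ.symm)^[k] g) = g :=
  (Function.LeftInverse.iterate (fun x => V.σΓ.apply_symm_apply x) k) g

lemma prod_pow_single (f : Fin N → K) (t : Fin N) :
    (∏ k : Fin N, (f k) ^ ((Finsupp.single t 1) k)) = f t := by
  rw [Finset.prod_eq_single t]
  · rw [Finsupp.single_eq_same, pow_one]
  · intro k _ hk
    rw [Finsupp.single_eq_of_ne hk, pow_zero]
  · simp

lemma v_map_iter_pos (k : ℕ) {q : WithTop Γ} (hq : 0 < q) :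
    (0 : WithTop Γ) < WithTop.map ((⇑V.σΓ)^[k]) q := by
  cases q with
  | top => exact lt_of_lt_of_le hq le_top
  | coe x =>
    rw [WithTop.map_coe]
    have hx : (0 : Γ) < x := by exact_mod_cast hq
    have := V.sigmaG_iter_strictMono k hx
    rw [V.sigmaG_iter_zero k] at this
    exact_mod_cast this

end VDF

open VDF in
/-- residue characteristic `0`, Axiom 2, and `(G, a)` in σ-hensel
configuration. Then there is `b` with `v (b - a) ≥ γ(G,a)`, `v (G(b)) > v (G(a))`,
and either `G(b) = 0` or `(G, b)` is in σ-hensel configuration; moreover any such `b`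
satisfies `v (b - a) = γ(G,a)` and `γ(G,b) > γ(G,a)`. -/
theorem stmt10 {K : Type*} [Field K] {Γ : Type*} [AddCommGroup Γ] [LinearOrder Γ] [IsOrderedAddMonoid Γ]
    (V : VDF K Γ) (hchar : V.resChar0) (hax2 : V.axiom2)
    (n : ℕ) (P : MvPolynomial (Fin (n + 1)) K) (a : K) (γ : Γ) (h : V.InSHC P a γ) :
    (∃ b : K, (γ : WithTop Γ) ≤ V.v (b - a) ∧
        V.v (V.sEval P a) < V.v (V.sEval P b) ∧
        (V.sEval P b = 0 ∨ ∃ γ' : Γ, V.InSHC P b γ')) ∧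
    (∀ b : K, (γ : WithTop Γ) ≤ V.v (b - a) →
        V.v (V.sEval P a) < V.v (V.sEval P b) →
        (V.sEval P b = 0 ∨ ∃ γ' : Γ, V.InSHC P b γ') →
        V.v (b - a) = (γ : WithTop Γ) ∧ ∀ γ' : Γ, V.InSHC P b γ' → γ < γ') := by
  classical
  have hc : ∀ m : ℕ, 0 < m → (m : K) ≠ 0 := V.hc_of_resChar0 hchar
  obtain ⟨h1, h2, h3, h4⟩ := id h
  have hPne : P ≠ 0 := by
    intro hz
    obtain ⟨i, hi, _⟩ := h1
    rw [hz] at hi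
    simp at hi
  have hPa : V.sEval P a ≠ 0 := V.sEval_P_ne_zero hc h
  have hPaTop : V.v (V.sEval P a) ≠ ⊤ := V.v_ne_top_iff.mpr hPa
  obtain ⟨g, hg⟩ := WithTop.ne_top_iff_exists.mp hPaTop
  obtain ⟨i0, hi0deg, hi0eq⟩ := h2
  obtain ⟨k0, rfl⟩ := (degSum_eq_one_iff i0).mp hi0deg
  rw [V.sigmaIdx_single] at hi0eq
  have hsne : (Finsupp.single k0 1 : Fin (n + 1) →₀ ℕ) ≠ 0 :=
    fun hz => one_ne_zero (Finsupp.single_eq_zero.mp hz)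
  have hH0 : V.sEval (hasse P (Finsupp.single k0 1)) a ≠ 0 := by
    intro hz
    rw [(V.v_eq_top_iff _).mpr hz, top_add] at hi0eq
    exact hPaTop hi0eq
  have hH0Top : V.v (V.sEval (hasse P (Finsupp.single k0 1)) a) ≠ ⊤ := V.v_ne_top_iff.mpr hH0
  obtain ⟨h0v, hh0v⟩ := WithTop.ne_top_iff_exists.mp hH0Top
  have hHne : hasse P (Finsupp.single k0 1) ≠ 0 := by
    intro hz
    apply hH0
    rw [hz]
    exact V.sEval_zero a
  -- construct ε with v ε = γ
  set ε : K := (⇑V.σ.symm)^[(k0 : ℕ)]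
    (V.sEval P a / V.sEval (hasse P (Finsupp.single k0 1)) a) with hεdef
  have hqv : V.v (V.sEval P a / V.sEval (hasse P (Finsupp.single k0 1)) a)
      = (((⇑V.σΓ)^[(k0 : ℕ)] γ : Γ) : WithTop Γ) := by
    have hmul : (V.sEval P a / V.sEval (hasse P (Finsupp.single k0 1)) a)
        * V.sEval (hasse P (Finsupp.single k0 1)) a = V.sEval P a := div_mul_cancel₀ _ hH0
    have hv2 := congrArg V.v hmul
    rw [V.v_mul, hi0eq, ← hh0v, add_comm ((h0v : WithTop Γ))] at hv2
    exact WithTop.add_right_cancel WithTop.coe_ne_top hv2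
  have hve : V.v ε = (γ : WithTop Γ) := by
    rw [hεdef, V.v_symm_iter, hqv, WithTop.map_coe, V.sigmaG_iter_symm_cancel]
  -- axiom 2 data
  set w : Fin (n + 1) → K :=
    fun t => V.sEval (hasse P (Finsupp.single t 1)) a * (⇑V.σ)^[(t : ℕ)] ε with hwdef
  set aa : Fin (n + 1) → K := fun t => w t / V.sEval P a with haadef
  have haaPa : ∀ t, aa t * V.sEval P a = w t := fun t => div_mul_cancel₀ _ hPa
  have hwv : ∀ t, V.v (w t) = V.v (V.sEval (hasse P (Finsupp.single t 1)) a)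
      + ((V.sigmaIdx (Finsupp.single t 1) γ : Γ) : WithTop Γ) := by
    intro t
    show V.v (V.sEval (hasse P (Finsupp.single t 1)) a * (⇑V.σ)^[(t : ℕ)] ε) = _
    rw [V.v_mul, V.v_iter, hve, WithTop.map_coe, V.sigmaIdx_single]
  have haaval : ∀ t, V.v (aa t) + V.v (V.sEval P a) = V.v (w t) := by
    intro t
    have := congrArg V.v (haaPa t)
    rwa [V.v_mul] at this
  have haa0 : ∀ t, 0 ≤ V.v (aa t) := by
    intro t
    have h3t := h3 (Finsupp.single t 1) (degSum_single t)
    rw [← hwv t, ← haaval t] at h3t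
    refine (WithTop.add_le_add_iff_right hPaTop).mp ?_
    rw [zero_add]
    exact h3t
  have haak0 : V.v (aa k0) = 0 := by
    have heq : V.v (aa k0) + V.v (V.sEval P a) = 0 + V.v (V.sEval P a) := by
      rw [haaval k0, hwv k0, V.sigmaIdx_single, ← hi0eq, zero_add]
    exact WithTop.add_right_cancel hPaTop heq
  obtain ⟨u, hu0, husum⟩ := hax2 n aa haa0 ⟨k0, haak0⟩
  have huv : V.v u = 0 := by
    refine le_antisymm ?_ hu0
    by_contra hlt
    push_neg at hlt
    have hsv : (0 : WithTop Γ) < V.v (∑ t : Fin (n + 1), aa t * (⇑V.σ)^[(t : ℕ)] u) := by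
      refine V.v_sum_lt _ _ (lt_of_lt_of_le hlt le_top) ?_
      intro t _
      rw [V.v_mul, V.v_iter]
      exact lt_of_lt_of_le (V.v_map_iter_pos _ hlt) (le_add_of_nonneg_left (haa0 t))
    have hone := V.v_add_eq_of_lt (x := (1 : K))
      (y := ∑ t : Fin (n + 1), aa t * (⇑V.σ)^[(t : ℕ)] u) (by rw [V.v_one]; exact hsv)
    rw [V.v_one] at hone
    rw [hone] at husum
    exact lt_irrefl _ husum
  have hεu : V.v (ε * u) = (γ : WithTop Γ) := by rw [V.v_mul, hve, huv, add_zero]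
  set b : K := a + ε * u with hbdef
  have hvba : V.v (b - a) = (γ : WithTop Γ) := by
    rw [show b - a = ε * u from by rw [hbdef]; ring, hεu]
  -- Taylor expansion at b
  have hTaylor := V.taylor_sEval P a (ε * u)
  rw [← hbdef] at hTaylor
  have h0S : (0 : Fin (n + 1) →₀ ℕ) ∈ (DD P).support := zero_mem_DD_support hPne
  set M : (Fin (n + 1) →₀ ℕ) → K :=
    fun j => ∏ k : Fin (n + 1), ((⇑V.σ)^[(k : ℕ)] (ε * u)) ^ (j k) with hMdef
  set T : (Fin (n + 1) →₀ ℕ) → K := fun j => V.sEval (hasse P j) a * M j with hTdef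
  have hT0 : T 0 = V.sEval P a := by
    show V.sEval (hasse P 0) a * M 0 = V.sEval P a
    rw [hasse_zero_idx]
    have : M 0 = 1 := by
      show (∏ k : Fin (n + 1), ((⇑V.σ)^[(k : ℕ)] (ε * u)) ^ ((0 : Fin (n + 1) →₀ ℕ) k)) = 1
      simp
    rw [this, mul_one]
  have hsplit : V.sEval P b = V.sEval P a
      + ((∑ j ∈ ((DD P).support.erase 0).filter (fun j => degSum j = 1), T j)
        + ∑ j ∈ ((DD P).support.erase 0).filter (fun j => ¬ degSum j = 1), T j) := by
    rw [hTaylor, ← Finset.add_sum_erase _ T h0S, hT0,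
      Finset.sum_filter_add_sum_filter_not ((DD P).support.erase 0) (fun j => degSum j = 1) T]
  -- the degree-one part
  set U := Finset.univ.filter (fun t : Fin (n + 1) => Finsupp.single t 1 ∈ (DD P).support)
    with hUdef
  have himg : ((DD P).support.erase 0).filter (fun j => degSum j = 1)
      = U.image (fun t => Finsupp.single t 1) := by
    ext j
    simp only [Finset.mem_filter, Finset.mem_erase, Finset.mem_image, Finset.mem_univ,
      true_and, hUdef]
    constructor
    · rintro ⟨⟨hj0, hjS⟩, hdeg⟩
      obtain ⟨t, rfl⟩ := (degSum_eq_one_iff j).mp hdeg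
      exact ⟨t, hjS, rfl⟩
    · rintro ⟨t, htS, rfl⟩
      exact ⟨⟨fun hz => one_ne_zero (Finsupp.single_eq_zero.mp hz), htS⟩, degSum_single t⟩
  have hsum1 : ∑ j ∈ ((DD P).support.erase 0).filter (fun j => degSum j = 1), T j
      = ∑ t ∈ U, T (Finsupp.single t 1) := by
    rw [himg, Finset.sum_image (fun x _ y _ hxy => Finsupp.single_left_injective one_ne_zero hxy)]
  have hTsingle : ∀ t : Fin (n + 1), T (Finsupp.single t 1) = w t * (⇑V.σ)^[(t : ℕ)] u := by
    intro t
    show V.sEval (hasse P (Finsupp.single t 1)) a * M (Finsupp.single t 1) = _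
    have hM : M (Finsupp.single t 1) = (⇑V.σ)^[(t : ℕ)] ε * (⇑V.σ)^[(t : ℕ)] u := by
      show (∏ k : Fin (n + 1), ((⇑V.σ)^[(k : ℕ)] (ε * u)) ^ ((Finsupp.single t 1) k)) = _
      rw [prod_pow_single]
      exact V.iter_mul _ ε u
    rw [hM, hwdef]
    ring
  have hsum2 : ∑ t ∈ U, T (Finsupp.single t 1)
      = ∑ t : Fin (n + 1), w t * (⇑V.σ)^[(t : ℕ)] u := by
    rw [Finset.sum_congr rfl (fun t _ => hTsingle t)]
    refine Finset.sum_subset (Finset.subset_univ U) ?_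
    intro t _ htU
    have hz : hasse P (Finsupp.single t 1) = 0 := by
      by_contra hne2
      apply htU
      rw [hUdef]
      simp only [Finset.mem_filter, Finset.mem_univ, true_and, MvPolynomial.mem_support_iff]
      rw [← hasse_eq_coeff_DD]
      exact hne2
    show w t * (⇑V.σ)^[(t : ℕ)] u = 0
    rw [hwdef]
    show V.sEval (hasse P (Finsupp.single t 1)) a * (⇑V.σ)^[(t : ℕ)] ε * _ = 0
    rw [hz, V.sEval_zero, zero_mul, zero_mul]
  have hfinal : V.sEval P b
      = V.sEval P a * (1 + ∑ t : Fin (n + 1), aa t * (⇑V.σ)^[(t : ℕ)] u)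
        + ∑ j ∈ ((DD P).support.erase 0).filter (fun j => ¬ degSum j = 1), T j := by
    rw [hsplit, hsum1, hsum2]
    rw [Finset.sum_congr rfl (fun t _ => by rw [← haaPa t] :
      ∀ t ∈ Finset.univ, w t * (⇑V.σ)^[(t : ℕ)] u
        = aa t * V.sEval P a * (⇑V.σ)^[(t : ℕ)] u)]
    rw [mul_add, mul_one, Finset.mul_sum]
    rw [Finset.sum_congr rfl (fun t _ => by ring :
      ∀ t ∈ Finset.univ, aa t * V.sEval P a * (⇑V.σ)^[(t : ℕ)] u
        = V.sEval P a * (aa t * (⇑V.σ)^[(t : ℕ)] u))]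
    ring
  -- the main value estimate
  have hvPb : V.v (V.sEval P a) < V.v (V.sEval P b) := by
    rw [hfinal]
    have hA : V.v (V.sEval P a)
        < V.v (V.sEval P a * (1 + ∑ t : Fin (n + 1), aa t * (⇑V.σ)^[(t : ℕ)] u)) := by
      rw [V.v_mul]
      calc V.v (V.sEval P a) = V.v (V.sEval P a) + 0 := (add_zero _).symm
        _ < _ := WithTop.add_lt_add_left hPaTop husum
    have hB : V.v (V.sEval P a)
        < V.v (∑ j ∈ ((DD P).support.erase 0).filter (fun j => ¬ degSum j = 1), T j) := by
      refine V.v_sum_lt _ _ (lt_top_iff_ne_top.mpr hPaTop) ?_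
      intro j hj
      rw [Finset.mem_filter, Finset.mem_erase] at hj
      obtain ⟨⟨hj0, hjS⟩, hdeg⟩ := hj
      have hne2 : hasse P j ≠ 0 := by
        rw [hasse_eq_coeff_DD]
        exact MvPolynomial.mem_support_iff.mp hjS
      show V.v (V.sEval P a) < V.v (V.sEval (hasse P j) a * M j)
      rw [V.v_mul]
      have hMv : V.v (M j) = ((V.sigmaIdx j γ : Γ) : WithTop Γ) := V.v_monomial_eval hεu j
      rw [hMv]
      exact V.higher_term_gt hc h hj0 hdeg hne2
    exact lt_of_lt_of_le (lt_min hA hB) (V.v_add _ _)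
  constructor
  · refine ⟨b, le_of_eq hvba.symm, hvPb, ?_⟩
    by_cases hPb : V.sEval P b = 0
    · exact Or.inl hPb
    right
    have hval : ∀ j : Fin (n + 1) →₀ ℕ, j ≠ 0 →
        V.v (V.sEval (hasse P j) b) = V.v (V.sEval (hasse P j) a) :=
      fun j hj => V.val_preserve hchar h hvba j hj
    obtain ⟨g', hg'⟩ := WithTop.ne_top_iff_exists.mp (V.v_ne_top_iff.mpr hPb)
    set T' := Finset.univ.filter
      (fun k : Fin (n + 1) => hasse P (Finsupp.single k 1) ≠ 0) with hT'def
    have hk0T' : k0 ∈ T' := by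
      rw [hT'def]
      simp only [Finset.mem_filter, Finset.mem_univ, true_and]
      exact hHne
    have hT'ne : T'.Nonempty := ⟨k0, hk0T'⟩
    have hfex : ∀ k, k ∈ T' →
        ∃ y : Γ, (↑y : WithTop Γ) = V.v (V.sEval (hasse P (Finsupp.single k 1)) b) := by
      intro k hk
      have hkne : hasse P (Finsupp.single k 1) ≠ 0 := by
        rw [hT'def] at hk
        simpa using hk
      have hksne : (Finsupp.single k 1 : Fin (n + 1) →₀ ℕ) ≠ 0 :=
        fun hz => one_ne_zero (Finsupp.single_eq_zero.mp hz)
      have hnt : V.v (V.sEval (hasse P (Finsupp.single k 1)) b) ≠ ⊤ := by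
        rw [hval _ hksne]
        exact V.v_ne_top_iff.mpr (V.sEval_hasse_ne_zero h hksne hkne)
      exact WithTop.ne_top_iff_exists.mp hnt
    choose! hf hfspec using hfex
    set δ : Fin (n + 1) → Γ := fun k => (⇑V.σΓ.symm)^[(k : ℕ)] (g' - hf k) with hδdef
    set γ' : Γ := (T'.image δ).max' (hT'ne.image δ) with hγ'def
    have hδle : ∀ k ∈ T', δ k ≤ γ' := fun k hk =>
      Finset.le_max' _ _ (Finset.mem_image_of_mem δ hk)
    obtain ⟨k1, hk1T', hk1δ⟩ : ∃ k1 ∈ T', δ k1 = γ' := by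
      have hmem := (T'.image δ).max'_mem (hT'ne.image δ)
      rw [← hγ'def] at hmem
      obtain ⟨k1, hk1, hk1e⟩ := Finset.mem_image.mp hmem
      exact ⟨k1, hk1, hk1e⟩
    have hiter : ∀ k : Fin (n + 1), (⇑V.σΓ)^[(k : ℕ)] (δ k) = g' - hf k := by
      intro k
      rw [hδdef]
      exact V.sigmaG_symm_iter_cancel _ _
    have hγγ' : γ < γ' := by
      have hfk0 : hf k0 = h0v := by
        have hcoe : (↑(hf k0) : WithTop Γ) = (↑h0v : WithTop Γ) := by
          rw [hfspec k0 hk0T', hval _ hsne, ← hh0v]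
        exact_mod_cast hcoe
      have hgg' : g < g' := by
        have : (↑g : WithTop Γ) < (↑g' : WithTop Γ) := by rw [hg, hg']; exact hvPb
        exact_mod_cast this
      have hgeq : g = h0v + (⇑V.σΓ)^[(k0 : ℕ)] γ := by
        have : (↑g : WithTop Γ) = ↑(h0v + (⇑V.σΓ)^[(k0 : ℕ)] γ) := by
          rw [hg, hi0eq, ← hh0v, WithTop.coe_add]
        exact_mod_cast this
      have hstep : (⇑V.σΓ)^[(k0 : ℕ)] γ < (⇑V.σΓ)^[(k0 : ℕ)] (δ k0) := by
        rw [hiter k0, hfk0]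
        have h7 : (⇑V.σΓ)^[(k0 : ℕ)] γ = g - h0v := by rw [hgeq]; abel
        rw [h7]
        exact sub_lt_sub_right hgg' h0v
      exact lt_of_lt_of_le ((V.sigmaG_iter_strictMono (k0 : ℕ)).lt_iff_lt.mp hstep)
        (hδle k0 hk0T')
    refine ⟨γ', h1, ⟨Finsupp.single k1 1, degSum_single k1, ?_⟩, ?_, ?_⟩
    · rw [V.sigmaIdx_single, ← hfspec k1 hk1T', ← hg', ← hk1δ, hiter k1, ← WithTop.coe_add]
      norm_cast
      abel
    · intro j hdegj
      obtain ⟨k, rfl⟩ := (degSum_eq_one_iff j).mp hdegj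
      rw [V.sigmaIdx_single]
      by_cases hkT' : k ∈ T'
      · rw [← hfspec k hkT', ← hg', ← WithTop.coe_add, WithTop.coe_le_coe]
        have h6 : (⇑V.σΓ)^[(k : ℕ)] (δ k) ≤ (⇑V.σΓ)^[(k : ℕ)] γ' :=
          (V.sigmaG_iter_strictMono (k : ℕ)).monotone (hδle k hkT')
        rw [hiter k] at h6
        exact sub_le_iff_le_add'.mp h6
      · have hz : hasse P (Finsupp.single k 1) = 0 := by
          rw [hT'def] at hkT'
          simpa using hkT'
        rw [hz, V.sEval_zero, (V.v_eq_top_iff (0 : K)).mpr rfl, top_add]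
        exact le_top
    · intro j l hj hl hne2
      rw [hval j hj, hval (j + l) (finsupp_add_ne_zero hj)]
      have h4' := h4 j l hj hl hne2
      rw [V.sigmaIdx_add, WithTop.coe_add, ← add_assoc, add_right_comm] at h4'
      have hstep : V.v (V.sEval (hasse P j) a)
          < V.v (V.sEval (hasse P (j + l)) a) + ((V.sigmaIdx l γ : Γ) : WithTop Γ) :=
        (WithTop.add_lt_add_iff_right WithTop.coe_ne_top).mp h4'
      have hstep2 : V.v (V.sEval (hasse P j) a)
          < V.v (V.sEval (hasse P (j + l)) a) + ((V.sigmaIdx l γ' : Γ) : WithTop Γ) :=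
        lt_of_lt_of_le hstep
          (add_le_add_right (WithTop.coe_le_coe.mpr (V.sigmaIdx_mono l hγγ'.le)) _)
      rw [V.sigmaIdx_add, WithTop.coe_add, ← add_assoc, add_right_comm]
      exact (WithTop.add_lt_add_iff_right WithTop.coe_ne_top).mpr hstep2
  · intro b' hb1 hb2 _
    have hvb'a := V.vba_eq hchar h hb1 hb2
    refine ⟨hvb'a, ?_⟩
    intro γ'' hSHC
    have hpres := V.val_preserve hchar h hvb'a (Finsupp.single k0 1) hsne
    have h3'' := hSHC.2.2.1 (Finsupp.single k0 1) (degSum_single k0)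
    rw [V.sigmaIdx_single, hpres, ← hh0v] at h3''
    have hlt : V.v (V.sEval P a)
        < (↑h0v : WithTop Γ) + ((((⇑V.σΓ)^[(k0 : ℕ)] γ'') : Γ) : WithTop Γ) :=
      lt_of_lt_of_le hb2 h3''
    rw [hi0eq, ← hh0v, ← WithTop.coe_add, ← WithTop.coe_add, WithTop.coe_lt_coe] at hlt
    have hlt2 : (⇑V.σΓ)^[(k0 : ℕ)] γ < (⇑V.σΓ)^[(k0 : ℕ)] γ'' :=
      lt_of_add_lt_add_left hlt
    exact (V.sigmaG_iter_strictMono (k0 : ℕ)).lt_iff_lt.mp hlt2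
end
end

section
/- (Kapranov's theorem, one variable) Let F be a nonzero polynomial in one variable over an algebraically closed nontrivially valued field (K, Γ, v), and let γ ∈ Γ be a tropical zero of F. Then there exists a ∈ K with v(a) = γ and F(a) = 0. -/
noncomputable section
open scoped Classical

/-- A valued field `(K, v)` with value group `Γ` (additive, `v 0 = ⊤`). -/
structure VF (K : Type*) [Field K] (Γ : Type*) [AddCommGroup Γ] [LinearOrder Γ] [IsOrderedAddMonoid Γ] where
  v : K → WithTop Γ
  v_eq_top_iff : ∀ x : K, v x = ⊤ ↔ x = 0
  v_one : v 1 = 0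
  v_mul : ∀ x y : K, v (x * y) = v x + v y
  v_neg : ∀ x : K, v (-x) = v x
  v_add : ∀ x y : K, min (v x) (v y) ≤ v (x + y)

namespace VF

variable {K : Type*} [Field K] {Γ : Type*} [AddCommGroup Γ] [LinearOrder Γ] [IsOrderedAddMonoid Γ]

/-- The tropicalization `F_v(γ) = min_i (v (a_i) + i γ)` of a one-variable polynomial
`F = Σ_i a_i x^i` (minimum over indices with `a_i ≠ 0`). -/
def Fv1 (V : VF K Γ) (F : Polynomial K) (γ : Γ) : WithTop Γ :=
  F.support.inf fun i => V.v (F.coeff i) + ((i • γ : Γ) : WithTop Γ)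

/-- `γ` is a tropical zero of `F`: the minimum `F_v(γ)` is attained at two distinct
indices. -/
def TropZero (V : VF K Γ) (F : Polynomial K) (γ : Γ) : Prop :=
  ∃ i ∈ F.support, ∃ j ∈ F.support, i ≠ j ∧
    V.v (F.coeff i) + ((i • γ : Γ) : WithTop Γ) = V.Fv1 F γ ∧
    V.v (F.coeff j) + ((j • γ : Γ) : WithTop Γ) = V.Fv1 F γ

/-- The valuation is nontrivial. -/
def Nontriv (V : VF K Γ) : Prop := ∃ x : K, x ≠ 0 ∧ V.v x ≠ 0

end VF

/-! ### Auxiliary lemmas for Kapranov's theorem -/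

namespace VF

open Polynomial

variable {K : Type*} [Field K] {Γ : Type*} [AddCommGroup Γ] [LinearOrder Γ] [IsOrderedAddMonoid Γ] (V : VF K Γ)

lemma v_zero' : V.v 0 = ⊤ := (V.v_eq_top_iff 0).2 rfl

lemma v_sub_ge (x y : K) : min (V.v x) (V.v y) ≤ V.v (x - y) := by
  have := V.v_add x (-y)
  rwa [V.v_neg, ← sub_eq_add_neg] at this

lemma v_add_eq_left {x y : K} (h : V.v x < V.v y) : V.v (x + y) = V.v x := by
  have h1 : V.v x ≤ V.v (x + y) := le_trans (le_min le_rfl h.le) (V.v_add x y)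
  refine le_antisymm ?_ h1
  by_contra hc
  push_neg at hc
  have hxy : x + y + -y = x := by ring
  have h3 : min (V.v (x + y)) (V.v (-y)) ≤ V.v x := by
    have h4 := V.v_add (x + y) (-y)
    rwa [hxy] at h4
  rw [V.v_neg] at h3
  exact absurd h3 (not_le.2 (lt_min hc h))

lemma v_sum_lt {ι : Type*} {B : WithTop Γ} (hB : B ≠ ⊤) (s : Finset ι) (f : ι → K)
    (h : ∀ i ∈ s, B < V.v (f i)) : B < V.v (∑ i ∈ s, f i) := by
  classical
  induction s using Finset.induction_on with
  | empty => simpa [V.v_zero'] using lt_top_iff_ne_top.2 hB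
  | insert _ _ hx ih =>
    rw [Finset.sum_insert hx]
    exact lt_of_lt_of_le
      (lt_min (h _ (Finset.mem_insert_self _ _))
        (ih fun i hi => h i (Finset.mem_insert_of_mem hi))) (V.v_add _ _)

lemma v_sum_eq {ι : Type*} {B : WithTop Γ} (hB : B ≠ ⊤) (s : Finset ι) (f : ι → K)
    (i₀ : ι) (hi₀ : i₀ ∈ s) (h0 : V.v (f i₀) = B)
    (h : ∀ i ∈ s, i ≠ i₀ → B < V.v (f i)) : V.v (∑ i ∈ s, f i) = B := by
  classical
  rw [← Finset.add_sum_erase s f hi₀, V.v_add_eq_left, h0]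
  rw [h0]
  exact V.v_sum_lt hB _ _ fun i hi =>
    h i (Finset.mem_of_mem_erase hi) (Finset.ne_of_mem_erase hi)

lemma msum_ne_top (t : Multiset (WithTop Γ)) (h : ∀ x ∈ t, x ≠ ⊤) : t.sum ≠ ⊤ := by
  induction t using Multiset.induction_on with
  | empty => simp
  | cons a t ih =>
    rw [Multiset.sum_cons]
    exact WithTop.add_ne_top.2
      ⟨h a (Multiset.mem_cons_self a t), ih fun x hx => h x (Multiset.mem_cons_of_mem hx)⟩

/-- Claim A: if all roots have valuation `> γ` then `min_b (v(coeff b) + bγ)` is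
uniquely attained at `b = card s`. -/
lemma claimA (γ : Γ) (s : Multiset K) :
    (∀ r ∈ s, (γ : WithTop Γ) < V.v r) → ∀ b : ℕ,
      (((Multiset.card s • γ : Γ) : WithTop Γ) ≤
          V.v ((s.map fun r => X - C r).prod.coeff b) + ((b • γ : Γ) : WithTop Γ)) ∧
      (b ≠ Multiset.card s → ((Multiset.card s • γ : Γ) : WithTop Γ) <
          V.v ((s.map fun r => X - C r).prod.coeff b) + ((b • γ : Γ) : WithTop Γ)) := by
  induction s using Multiset.induction_on with
  | empty =>
    intro _ b
    rcases Nat.eq_zero_or_pos b with hb | hb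
    · subst hb
      simp [V.v_one]
    · have hb' : b ≠ 0 := hb.ne'
      have : ((1 : Polynomial K).coeff b) = 0 := by
        simp [Polynomial.coeff_one, hb']
      simp only [Multiset.map_zero, Multiset.prod_zero, this, V.v_zero', Multiset.card_zero,
        zero_smul]
      constructor
      · simp
      · intro _
        simp [WithTop.coe_lt_top]
  | cons r s ih =>
    intro hs b
    have hr : (γ : WithTop Γ) < V.v r := hs r (Multiset.mem_cons_self r s)
    have hs' : ∀ x ∈ s, (γ : WithTop Γ) < V.v x := fun x hx => hs x (Multiset.mem_cons_of_mem hx)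
    have IH := ih hs'
    rw [Multiset.map_cons, Multiset.prod_cons]
    rw [Multiset.card_cons]
    set P := (s.map fun r => X - C r).prod with hP
    set n := Multiset.card s with hn
    have hcard : ((n + 1) • γ : Γ) = n • γ + γ := by rw [succ_nsmul]
    rcases Nat.eq_zero_or_pos b with hb | hb
    · -- b = 0
      subst hb
      have hco : ((X - C r) * P).coeff 0 = -(r * P.coeff 0) := by
        simp [sub_mul, mul_coeff_zero]
      rw [hco, V.v_neg, V.v_mul]
      have h1 : ((n • γ : Γ) : WithTop Γ) ≤ V.v (P.coeff 0) := by
        have := (IH 0).1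
        simpa using this
      have key : (((n + 1) • γ : Γ) : WithTop Γ) < V.v r + V.v (P.coeff 0) := by
        rw [hcard, WithTop.coe_add, add_comm ((n • γ : Γ) : WithTop Γ)]
        exact WithTop.add_lt_add_of_lt_of_le (WithTop.coe_ne_top) hr h1
      constructor
      · simpa using key.le
      · intro _
        simpa using key
    · -- b = m + 1
      obtain ⟨m, rfl⟩ := Nat.exists_eq_add_of_lt hb
      rw [zero_add] at *
      have hco : ((X - C r) * P).coeff (m + 1) = P.coeff m - r * P.coeff (m + 1) := by
        simp [sub_mul, coeff_X_mul]
      rw [hco]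
      have harm2 : (((n + 1) • γ : Γ) : WithTop Γ) <
          V.v (r * P.coeff (m + 1)) + (((m + 1) • γ : Γ) : WithTop Γ) := by
        rw [V.v_mul, add_assoc, hcard, WithTop.coe_add, add_comm ((n • γ : Γ) : WithTop Γ)]
        exact WithTop.add_lt_add_of_lt_of_le (WithTop.coe_ne_top) hr (IH (m + 1)).1
      have harm1 : (((n + 1) • γ : Γ) : WithTop Γ) ≤
          V.v (P.coeff m) + (((m + 1) • γ : Γ) : WithTop Γ) ∧
          (m ≠ n → (((n + 1) • γ : Γ) : WithTop Γ) <
            V.v (P.coeff m) + (((m + 1) • γ : Γ) : WithTop Γ)) := by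
        have e1 : (((m + 1) • γ : Γ) : WithTop Γ) = ((m • γ : Γ) : WithTop Γ) + (γ : WithTop Γ) := by
          rw [succ_nsmul, WithTop.coe_add]
        rw [e1, ← add_assoc, hcard, WithTop.coe_add]
        constructor
        · exact add_le_add_left (IH m).1 _
        · intro hmn
          exact WithTop.add_lt_add_of_lt_of_le (WithTop.coe_ne_top) ((IH m).2 hmn) le_rfl
      have hmin : min (V.v (P.coeff m)) (V.v (r * P.coeff (m + 1))) ≤
          V.v (P.coeff m - r * P.coeff (m + 1)) := V.v_sub_ge _ _
      constructor
      · rcases le_total (V.v (P.coeff m)) (V.v (r * P.coeff (m + 1))) with h | h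
        · refine le_trans harm1.1 (add_le_add_left ?_ _)
          exact le_trans (by simp [h]) hmin
        · refine le_trans harm2.le (add_le_add_left ?_ _)
          exact le_trans (by simp [h]) hmin
      · intro hbne
        have hmn : m ≠ n := fun h => hbne (by rw [h])
        rcases le_total (V.v (P.coeff m)) (V.v (r * P.coeff (m + 1))) with h | h
        · refine lt_of_lt_of_le (harm1.2 hmn) (add_le_add_left ?_ _)
          exact le_trans (by simp [h]) hmin
        · refine lt_of_lt_of_le harm2 (add_le_add_left ?_ _)
          exact le_trans (by simp [h]) hmin

/-- Claim B: if all roots have valuation `< γ` then `min_a (v(coeff a) + aγ)` is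
uniquely attained at `a = 0`, with value `Σ v(r)`. -/
lemma claimB (γ : Γ) (s : Multiset K) :
    (∀ r ∈ s, V.v r < (γ : WithTop Γ)) →
      V.v ((s.map fun r => X - C r).prod.coeff 0) = (s.map V.v).sum ∧
      ∀ a : ℕ, ((s.map V.v).sum ≤
          V.v ((s.map fun r => X - C r).prod.coeff a) + ((a • γ : Γ) : WithTop Γ)) ∧
        (a ≠ 0 → (s.map V.v).sum <
          V.v ((s.map fun r => X - C r).prod.coeff a) + ((a • γ : Γ) : WithTop Γ)) := by
  induction s using Multiset.induction_on with
  | empty =>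
    intro _
    constructor
    · simp [V.v_one]
    · intro a
      rcases Nat.eq_zero_or_pos a with ha | ha
      · subst ha; simp [V.v_one]
      · have ha' : a ≠ 0 := ha.ne'
        have : ((1 : Polynomial K).coeff a) = 0 := by simp [Polynomial.coeff_one, ha']
        simp [this, V.v_zero', WithTop.coe_lt_top]
  | cons r s ih =>
    intro hs
    have hr : V.v r < (γ : WithTop Γ) := hs r (Multiset.mem_cons_self r s)
    have hrt : V.v r ≠ ⊤ := ne_top_of_lt hr
    have hs' : ∀ x ∈ s, V.v x < (γ : WithTop Γ) := fun x hx => hs x (Multiset.mem_cons_of_mem hx)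
    have IH := ih hs'
    have hS' : (s.map V.v).sum ≠ ⊤ := by
      refine msum_ne_top _ fun x hx => ?_
      obtain ⟨y, hy, rfl⟩ := Multiset.mem_map.1 hx
      exact ne_top_of_lt (hs' y hy)
    rw [Multiset.map_cons, Multiset.prod_cons, Multiset.map_cons, Multiset.sum_cons]
    set P := (s.map fun r => X - C r).prod with hP
    set S := (s.map V.v).sum with hSdef
    have hc0 : V.v (((X - C r) * P).coeff 0) = V.v r + S := by
      have hco : ((X - C r) * P).coeff 0 = -(r * P.coeff 0) := by
        simp [sub_mul, mul_coeff_zero]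
      rw [hco, V.v_neg, V.v_mul, IH.1]
    refine ⟨hc0, fun a => ?_⟩
    rcases Nat.eq_zero_or_pos a with ha | ha
    · subst ha
      exact ⟨by rw [zero_smul, WithTop.coe_zero, add_zero, hc0], fun h => absurd rfl h⟩
    · obtain ⟨m, rfl⟩ := Nat.exists_eq_add_of_lt ha
      rw [zero_add] at *
      have hco : ((X - C r) * P).coeff (m + 1) = P.coeff m - r * P.coeff (m + 1) := by
        simp [sub_mul, coeff_X_mul]
      rw [hco]
      have harm1 : V.v r + S < V.v (P.coeff m) + (((m + 1) • γ : Γ) : WithTop Γ) := by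
        have e1 : (((m + 1) • γ : Γ) : WithTop Γ) = ((m • γ : Γ) : WithTop Γ) + (γ : WithTop Γ) := by
          rw [succ_nsmul, WithTop.coe_add]
        rw [e1, ← add_assoc]
        calc V.v r + S = S + V.v r := add_comm _ _
          _ < S + γ := WithTop.add_lt_add_left hS' hr
          _ ≤ (V.v (P.coeff m) + ((m • γ : Γ) : WithTop Γ)) + γ :=
              add_le_add_left (IH.2 m).1 _
      have harm2 : V.v r + S < V.v (r * P.coeff (m + 1)) + (((m + 1) • γ : Γ) : WithTop Γ) := by
        rw [V.v_mul, add_assoc]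
        exact WithTop.add_lt_add_left hrt ((IH.2 (m + 1)).2 (Nat.succ_ne_zero m))
      have hmin : min (V.v (P.coeff m)) (V.v (r * P.coeff (m + 1))) ≤
          V.v (P.coeff m - r * P.coeff (m + 1)) := V.v_sub_ge _ _
      have key : V.v r + S <
          V.v (P.coeff m - r * P.coeff (m + 1)) + (((m + 1) • γ : Γ) : WithTop Γ) := by
        rcases le_total (V.v (P.coeff m)) (V.v (r * P.coeff (m + 1))) with h | h
        · exact lt_of_lt_of_le harm1 (add_le_add_left (le_trans (by simp [h]) hmin) _)
        · exact lt_of_lt_of_le harm2 (add_le_add_left (le_trans (by simp [h]) hmin) _)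
      exact ⟨key.le, fun _ => key⟩

end VF

/-- Kapranov's theorem, one variable: if `F` is a nonzero one-variable
polynomial over an algebraically closed nontrivially valued field and `γ` is a
tropical zero of `F`, then `F` has a root of valuation `γ`. -/
theorem stmt14 {K : Type*} [Field K] [IsAlgClosed K]
    {Γ : Type*} [AddCommGroup Γ] [LinearOrder Γ] [IsOrderedAddMonoid Γ]
    (V : VF K Γ) (hnt : V.Nontriv)
    (F : Polynomial K) (hF : F ≠ 0) (γ : Γ) (htz : V.TropZero F γ) :
    ∃ a : K, V.v a = (γ : WithTop Γ) ∧ Polynomial.eval a F = 0 := by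
  classical
  open Polynomial in
  by_contra hcon
  push_neg at hcon
  obtain ⟨i, hi, j, hj, hij, hvi, hvj⟩ := htz
  set c := F.leadingCoeff with hcdef
  have hc : c ≠ 0 := Polynomial.leadingCoeff_ne_zero.2 hF
  have hsplit : F = Polynomial.C c * (F.roots.map fun a => X - C a).prod :=
    (IsAlgClosed.splits F).eq_prod_roots
  set s₁ := F.roots.filter (fun r => V.v r < (γ : WithTop Γ)) with hs1def
  set s₂ := F.roots.filter (fun r => ¬ V.v r < (γ : WithTop Γ)) with hs2def
  have hpart : s₁ + s₂ = F.roots := Multiset.filter_add_not _ _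
  have hs₁ : ∀ r ∈ s₁, V.v r < (γ : WithTop Γ) := fun r hr => (Multiset.mem_filter.1 hr).2
  have hs₂ : ∀ r ∈ s₂, (γ : WithTop Γ) < V.v r := by
    intro r hr
    obtain ⟨hr1, hr2⟩ := Multiset.mem_filter.1 hr
    have hroot : Polynomial.eval r F = 0 := (Polynomial.mem_roots hF).1 hr1
    have hne : V.v r ≠ (γ : WithTop Γ) := fun h => hcon r h hroot
    exact lt_of_le_of_ne (not_lt.1 hr2) (Ne.symm hne)
  set P₁ := (s₁.map fun a => X - C a).prod with hP1
  set P₂ := (s₂.map fun a => X - C a).prod with hP2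
  have hFQ : F = Polynomial.C c * (P₁ * P₂) := by
    rw [hsplit, ← hpart, Multiset.map_add, Multiset.prod_add]
  set n₂ := Multiset.card s₂ with hn2
  have hmon : P₂.Monic :=
    Polynomial.monic_multiset_prod_of_monic _ _ fun a _ => Polynomial.monic_X_sub_C a
  have hdeg : P₂.natDegree = n₂ := Polynomial.natDegree_multiset_prod_X_sub_C_eq_card s₂
  have hcoeffP₂ : P₂.coeff n₂ = 1 := by rw [← hdeg]; exact hmon.coeff_natDegree
  have hA := V.claimA γ s₂ hs₂
  have hB := V.claimB γ s₁ hs₁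
  have hS' : (s₁.map V.v).sum ≠ ⊤ := by
    refine VF.msum_ne_top _ fun x hx => ?_
    obtain ⟨y, hy, rfl⟩ := Multiset.mem_map.1 hx
    exact ne_top_of_lt (hs₁ y hy)
  obtain ⟨S₀, hS₀⟩ := WithTop.ne_top_iff_exists.1 hS'
  have hvc : V.v c ≠ ⊤ := fun h => hc ((V.v_eq_top_iff c).1 h)
  obtain ⟨c₀, hc₀⟩ := WithTop.ne_top_iff_exists.1 hvc
  -- key per-term estimate
  have hterm : ∀ (k a b : ℕ), a + b = k → (a, b) ≠ (0, n₂) →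
      ((S₀ + n₂ • γ - k • γ : Γ) : WithTop Γ) < V.v (P₁.coeff a) + V.v (P₂.coeff b) := by
    intro k a b hab hne
    have key : ((S₀ : WithTop Γ) + ((n₂ • γ : Γ) : WithTop Γ)) <
        (V.v (P₁.coeff a) + V.v (P₂.coeff b)) + ((k • γ : Γ) : WithTop Γ) := by
      have e : (V.v (P₁.coeff a) + V.v (P₂.coeff b)) + ((k • γ : Γ) : WithTop Γ)
          = (V.v (P₁.coeff a) + ((a • γ : Γ) : WithTop Γ)) +
            (V.v (P₂.coeff b) + ((b • γ : Γ) : WithTop Γ)) := by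
        rw [← hab, add_nsmul, WithTop.coe_add]
        abel
      rw [e]
      by_cases ha : a = 0
      · subst ha
        have hbne : b ≠ n₂ := fun h => hne (by rw [h])
        have h1 : (S₀ : WithTop Γ) ≤ V.v (P₁.coeff 0) + (((0 : ℕ) • γ : Γ) : WithTop Γ) := by
          rw [hS₀]; exact (hB.2 0).1
        exact WithTop.add_lt_add_of_le_of_lt WithTop.coe_ne_top h1 ((hA b).2 hbne)
      · have h1 : ((S₀ : WithTop Γ)) < V.v (P₁.coeff a) + ((a • γ : Γ) : WithTop Γ) := by
          rw [hS₀]; exact (hB.2 a).2 ha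
        exact WithTop.add_lt_add_of_lt_of_le WithTop.coe_ne_top h1 (hA b).1
    have e2 : (S₀ : WithTop Γ) + ((n₂ • γ : Γ) : WithTop Γ)
        = ((S₀ + n₂ • γ - k • γ : Γ) : WithTop Γ) + ((k • γ : Γ) : WithTop Γ) := by
      rw [← WithTop.coe_add, ← WithTop.coe_add]
      norm_cast
      abel
    rw [e2] at key
    exact (WithTop.add_lt_add_iff_right WithTop.coe_ne_top).1 key
  -- value at n₂
  have hQn₂ : V.v ((P₁ * P₂).coeff n₂) = (S₀ : WithTop Γ) := by
    rw [Polynomial.coeff_mul]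
    refine V.v_sum_eq WithTop.coe_ne_top _ _ ((0 : ℕ), n₂) ?_ ?_ ?_
    · simp [Finset.mem_antidiagonal]
    · rw [V.v_mul, hcoeffP₂, V.v_one, add_zero, hB.1, ← hS₀]
    · intro x hx hxne
      have hab := Finset.HasAntidiagonal.mem_antidiagonal.1 hx
      have hne : (x.1, x.2) ≠ ((0 : ℕ), n₂) := by
        intro h; exact hxne (Prod.ext (congrArg Prod.fst h) (congrArg Prod.snd h))
      have := hterm n₂ x.1 x.2 hab hne
      rw [V.v_mul]
      simpa [add_sub_cancel_right] using this
  have hFn₂ : V.v (F.coeff n₂) + ((n₂ • γ : Γ) : WithTop Γ)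
      = ((c₀ + S₀ + n₂ • γ : Γ) : WithTop Γ) := by
    conv_lhs => rw [hFQ]
    rw [Polynomial.coeff_C_mul, V.v_mul, hQn₂, ← hc₀]
    norm_cast
  -- strictness off n₂
  have hFstrict : ∀ k : ℕ, k ≠ n₂ →
      ((c₀ + S₀ + n₂ • γ : Γ) : WithTop Γ) < V.v (F.coeff k) + ((k • γ : Γ) : WithTop Γ) := by
    intro k hkne
    have hQ : ((S₀ + n₂ • γ - k • γ : Γ) : WithTop Γ) < V.v ((P₁ * P₂).coeff k) := by
      rw [Polynomial.coeff_mul]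
      refine V.v_sum_lt WithTop.coe_ne_top _ _ ?_
      intro x hx
      have hab := Finset.HasAntidiagonal.mem_antidiagonal.1 hx
      have hne : (x.1, x.2) ≠ ((0 : ℕ), n₂) := by
        intro h
        apply hkne
        rw [← hab, show x.1 = 0 from congrArg Prod.fst h, show x.2 = n₂ from congrArg Prod.snd h,
          zero_add]
      have := hterm k x.1 x.2 hab hne
      rwa [V.v_mul]
    have hvFk : V.v (F.coeff k) = (c₀ : WithTop Γ) + V.v ((P₁ * P₂).coeff k) := by
      conv_lhs => rw [hFQ]
      rw [Polynomial.coeff_C_mul, V.v_mul, ← hc₀]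
    have e3 : ((c₀ + S₀ + n₂ • γ : Γ) : WithTop Γ)
        = (c₀ : WithTop Γ) + (((S₀ + n₂ • γ - k • γ : Γ) : WithTop Γ) + ((k • γ : Γ) : WithTop Γ)) := by
      rw [← WithTop.coe_add, ← WithTop.coe_add]
      norm_cast
      abel
    rw [e3, hvFk, add_assoc]
    exact WithTop.add_lt_add_left WithTop.coe_ne_top
      (WithTop.add_lt_add_right WithTop.coe_ne_top hQ)
  -- conclude
  have hn₂supp : n₂ ∈ F.support := by
    rw [Polynomial.mem_support_iff]
    intro h0
    rw [h0, V.v_zero', top_add] at hFn₂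
    exact (WithTop.coe_ne_top (a := (c₀ + S₀ + n₂ • γ : Γ))) hFn₂.symm
  have hFv_le : V.Fv1 F γ ≤ ((c₀ + S₀ + n₂ • γ : Γ) : WithTop Γ) := by
    rw [← hFn₂]
    exact Finset.inf_le hn₂supp
  have hii : i = n₂ := by
    by_contra hne
    exact absurd (hvi.le.trans hFv_le) (not_le.2 (hFstrict i hne))
  have hjj : j = n₂ := by
    by_contra hne
    exact absurd (hvj.le.trans hFv_le) (not_le.2 (hFstrict j hne))
  exact hij (hii.trans hjj.symm)
end
end
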